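/- Suppose x ≥ 1 and ρ ≥ 1 satisfy x − (ζx − sqrt((ζx − 1)² + x − 1)) ≤ ln ρ, where ζ ≥ 1. Then x ≤ 1/2 + ((ζ−1)/(2ζ−1))·ln ρ + sqrt(1/4 + ((ζ−1)/(2ζ−1))·ln ρ + (ζ²/(2ζ−1)²)·ln² ρ). -/

import Mathlib

/-- if `x ≥ 1`, `ρ ≥ 1`, `ζ ≥ 1` satisfy
`x − (ζx − √((ζx−1)² + x−1)) ≤ ln ρ`, then
`x ≤ 1/2 + ((ζ−1)/(2ζ−1))·ln ρ + √(1/4 + ((ζ−1)/(2ζ−1))·ln ρ + (ζ²/(2ζ−1)²)·ln²ρ)`. -/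
theorem stmt_13 (x ρ ζ : ℝ) (hx : 1 ≤ x) (hρ : 1 ≤ ρ) (hζ : 1 ≤ ζ)
    (hdisc : 0 ≤ (ζ * x - 1) ^ 2 + x - 1)
    (h : x - (ζ * x - Real.sqrt ((ζ * x - 1) ^ 2 + x - 1)) ≤ Real.log ρ) :
    x ≤ 1 / 2 + ((ζ - 1) / (2 * ζ - 1)) * Real.log ρ +
      Real.sqrt (1 / 4 + ((ζ - 1) / (2 * ζ - 1)) * Real.log ρ +
        (ζ ^ 2 / (2 * ζ - 1) ^ 2) * (Real.log ρ) ^ 2) := by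
  set L := Real.log ρ with hLdef
  have hL : 0 ≤ L := Real.log_nonneg hρ
  have hden : (0:ℝ) < 2 * ζ - 1 := by linarith
  have h1 : Real.sqrt ((ζ * x - 1) ^ 2 + x - 1) ≤ L + (ζ - 1) * x := by linarith
  have h2 : (ζ * x - 1) ^ 2 + x - 1 ≤ (L + (ζ - 1) * x) ^ 2 := by
    have := pow_le_pow_left₀ (Real.sqrt_nonneg _) h1 2
    rwa [Real.sq_sqrt hdisc] at this
  -- quadratic inequality
  have hq : (2 * ζ - 1) * (x ^ 2 - x) ≤ 2 * L * (ζ - 1) * x + L ^ 2 := by nlinarith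
  set a : ℝ := (ζ - 1) / (2 * ζ - 1) with ha
  set M : ℝ := 1 + 2 * a * L with hM
  have hC : 1 / 4 + a * L + (ζ ^ 2 / (2 * ζ - 1) ^ 2) * L ^ 2
      = (M / 2) ^ 2 + L ^ 2 / (2 * ζ - 1) := by
    rw [hM, ha]; field_simp [show ζ * 2 - 1 ≠ 0 by linarith]; ring
  have hsq : (x - M / 2) ^ 2 ≤ (M / 2) ^ 2 + L ^ 2 / (2 * ζ - 1) := by
    have ha2 : a * (2 * ζ - 1) = ζ - 1 := by
      rw [ha]; field_simp [show ζ * 2 - 1 ≠ 0 by linarith]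
    have e : (x ^ 2 - M * x) * (2 * ζ - 1)
        = (2 * ζ - 1) * (x ^ 2 - x) - 2 * L * (ζ - 1) * x := by
      rw [hM]; linear_combination (-(2 * L * x)) * ha2
    have key : (x ^ 2 - M * x) * (2 * ζ - 1) ≤ L ^ 2 := by rw [e]; linarith
    have := (le_div_iff₀ hden).mpr key
    nlinarith [this]
  have h3 : x - M / 2 ≤ Real.sqrt ((M / 2) ^ 2 + L ^ 2 / (2 * ζ - 1)) := by
    calc x - M / 2 ≤ |x - M / 2| := le_abs_self _
      _ = Real.sqrt ((x - M / 2) ^ 2) := (Real.sqrt_sq_eq_abs _).symm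
      _ ≤ _ := Real.sqrt_le_sqrt hsq
  rw [hC]
  have : 1 / 2 + a * L = M / 2 := by rw [hM]; ring
  linarith
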